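/- Let G = (V, E) be a weighted digraph with nonnegative weights satisfying Assumptions 1 and 2, with source s having no incoming edges, and let t be a positive integer. Define G_1 = G and, as long as G_i has a vertex other than s, let G_{i+1} be the graph obtained from G_i by contracting Near_t(s) (computed in G_i) into s. Then for every i and every vertex v of G_i, dist_{G_i}(s, v) = dist_G(s, v); in particular, the iterative discover-and-contract scheme records the correct distance from s to every vertex of G. -/

import Mathlib

/-- A path from `s` to `t` in the digraph with edge set `E`: a finite sequence of edges
in which the head of each edge equals the tail of the next, starting at `s`, ending at `t`
(the empty sequence is a path from `s` to `s`). Paths need not be simple. -/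
inductive IsPath {V : Type*} (E : Set (V × V)) : V → V → List (V × V) → Prop
  | nil (s : V) : IsPath E s s []
  | cons {s u t : V} {P : List (V × V)} :
      (s, u) ∈ E → IsPath E u t P → IsPath E s t ((s, u) :: P)

/-- The weight of a path: the sum of its edge weights. -/
def pweight {V : Type*} (w : V × V → ℝ) (P : List (V × V)) : ℝ :=
  (P.map w).sum

/-- `distG E w u v` is the minimum weight of a path from `u` to `v`
(`+∞` if there is no such path). -/
noncomputable def distG {V : Type*} (E : Set (V × V)) (w : V × V → ℝ) (u v : V) : EReal :=
  sInf {r : EReal | ∃ P : List (V × V), IsPath E u v P ∧ r = (pweight w P : EReal)}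

/-- `v` is reachable from `u`. -/
def Reach {V : Type*} (E : Set (V × V)) (u v : V) : Prop :=
  ∃ P : List (V × V), IsPath E u v P

/-- Assumption 1: every proper (contiguous) subpath of a path has strictly smaller weight. -/
def Assumption1 {V : Type*} (E : Set (V × V)) (w : V × V → ℝ) : Prop :=
  ∀ (s t : V) (P : List (V × V)), IsPath E s t P →
    ∀ A P' B : List (V × V), P = A ++ P' ++ B → A ++ B ≠ [] →
      pweight w P' < pweight w P

/-- Assumption 2: for a fixed origin `u`, no two paths from `u` to distinct
targets have equal weight. -/
def Assumption2 {V : Type*} (E : Set (V × V)) (w : V × V → ℝ) : Prop :=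
  ∀ (u x y : V) (P₁ P₂ : List (V × V)), IsPath E u x P₁ → IsPath E u y P₂ → x ≠ y →
    pweight w P₁ ≠ pweight w P₂

/-- The edge set of the subgraph induced on the complement of `Z` (the graph `G − Z`). -/
def ERemove {V : Type*} (E : Set (V × V)) (Z : Set V) : Set (V × V) :=
  {e ∈ E | e.1 ∉ Z ∧ e.2 ∉ Z}

/-- `N` is the set of the `t` vertices distinct from `s` that are nearest to `s`
with respect to `distG` (or all vertices other than `s` reachable from `s`, if fewer
than `t` of them are reachable). -/
def IsNearSet {V : Type*} (E : Set (V × V)) (w : V × V → ℝ) (s : V) (t : ℕ)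
    (N : Finset V) : Prop :=
  s ∉ N ∧ (∀ x ∈ N, Reach E s x) ∧
  (∀ x ∈ N, ∀ y : V, y ∉ N → y ≠ s → Reach E s y → distG E w s x ≤ distG E w s y) ∧
  (N.card = t ∨ (N.card < t ∧ ∀ y : V, y ≠ s → Reach E s y → y ∈ N))

/-- `(a, b)` belongs to `E_t(a)`, i.e. it is among the `t` smallest-weight
outgoing edges of `a`. -/
def InTopT {V : Type*} (E : Set (V × V)) (w : V × V → ℝ) (t : ℕ) (a b : V) : Prop :=
  (a, b) ∈ E ∧ {c : V | (a, c) ∈ E ∧ w (a, c) < w (a, b)}.ncard < t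

/-- `(E', w')` is obtained from `(E, w)` by contracting `X` into `s`:
its vertices avoid `X`; it keeps every edge of `E` avoiding `X`, and has an edge `s → v`
whenever some `x ∈ X` has an edge `x → v` with `v ∉ X`; among the resulting parallel
edges only one of smallest weight (`w (s, v)` itself, or `distG s x + w (x, v)`) is kept. -/
def IsContraction {V : Type*} (E : Set (V × V)) (w : V × V → ℝ) (s : V) (X : Set V)
    (E' : Set (V × V)) (w' : V × V → ℝ) : Prop :=
  (∀ u v : V, ((u, v) ∈ E' ↔
      (u ∉ X ∧ v ∉ X ∧ ((u, v) ∈ E ∨ (u = s ∧ ∃ x ∈ X, (x, v) ∈ E))))) ∧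
  (∀ u v : V, (u, v) ∈ E' → u ≠ s → w' (u, v) = w (u, v)) ∧
  (∀ v : V, (s, v) ∈ E' →
      ((w' (s, v) : EReal) =
        sInf {r : EReal | ((s, v) ∈ E ∧ r = (w (s, v) : EReal)) ∨
          ∃ x ∈ X, (x, v) ∈ E ∧ r = distG E w s x + (w (x, v) : EReal)}))
section Aux

variable {V : Type*}

lemma isPath_append {E : Set (V × V)} {a b c : V} {P Q : List (V × V)}
    (hP : IsPath E a b P) (hQ : IsPath E b c Q) : IsPath E a c (P ++ Q) := by
  induction hP with
  | nil => simpa using hQ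
  | cons he _ ih => exact IsPath.cons he (ih hQ)

lemma pweight_append (w : V × V → ℝ) (P Q : List (V × V)) :
    pweight w (P ++ Q) = pweight w P + pweight w Q := by
  simp [pweight]

lemma pweight_nil (w : V × V → ℝ) : pweight w [] = 0 := by simp [pweight]

lemma pweight_single (w : V × V → ℝ) (e : V × V) : pweight w [e] = w e := by simp [pweight]

lemma pweight_nonneg {E : Set (V × V)} {w : V × V → ℝ} (hw : ∀ e ∈ E, 0 ≤ w e)
    {a b : V} {P : List (V × V)} (hP : IsPath E a b P) : 0 ≤ pweight w P := by
  induction hP with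
  | nil => simp [pweight]
  | cons he _ ih =>
      simp only [pweight, List.map_cons, List.sum_cons]
      exact add_nonneg (hw _ he) ih

lemma distG_le {E : Set (V × V)} {w : V × V → ℝ} {s v : V} {P : List (V × V)}
    (hP : IsPath E s v P) : distG E w s v ≤ (pweight w P : EReal) :=
  sInf_le ⟨P, hP, rfl⟩

lemma distG_nonneg {E : Set (V × V)} {w : V × V → ℝ} (hw : ∀ e ∈ E, 0 ≤ w e) (s v : V) :
    0 ≤ distG E w s v := by
  refine le_sInf ?_
  rintro r ⟨P, hP, rfl⟩
  exact EReal.coe_nonneg.mpr (pweight_nonneg hw hP)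

lemma ereal_le_of_forall {a : EReal} {b : ℝ}
    (h : ∀ ε : ℝ, 0 < ε → a ≤ ((b + ε : ℝ) : EReal)) : a ≤ (b : EReal) := by
  induction a using EReal.rec with
  | bot => exact bot_le
  | coe x =>
      refine EReal.coe_le_coe_iff.mpr (le_of_forall_pos_le_add fun ε hε => ?_)
      exact EReal.coe_le_coe_iff.mp (h ε hε)
  | top =>
      exact absurd (h 1 one_pos) (not_le.mpr (EReal.coe_lt_top _))

lemma distG_triangle {E : Set (V × V)} {w : V × V → ℝ} (hw : ∀ e ∈ E, 0 ≤ w e)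
    {s x v : V} (he : (x, v) ∈ E) :
    distG E w s v ≤ distG E w s x + (w (x, v) : EReal) := by
  by_cases hd : distG E w s x = ⊤
  · rw [hd, EReal.top_add_coe]; exact le_top
  · have h0 := distG_nonneg hw s x
    have hbot : distG E w s x ≠ ⊥ :=
      ((lt_of_lt_of_le (by simp : (⊥ : EReal) < 0) h0)).ne'
    obtain ⟨r, hr⟩ : ∃ r : ℝ, distG E w s x = (r : EReal) :=
      ⟨(distG E w s x).toReal, (EReal.coe_toReal hd hbot).symm⟩
    rw [hr, ← EReal.coe_add]
    refine ereal_le_of_forall fun ε hε => ?_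
    have hlt : distG E w s x < ((r + ε : ℝ) : EReal) := by
      rw [hr]; exact_mod_cast lt_add_of_pos_right r hε
    rw [distG] at hlt
    obtain ⟨p, hp, hplt⟩ := sInf_lt_iff.mp hlt
    obtain ⟨P, hP, rfl⟩ := hp
    have hPlt : pweight w P < r + ε := EReal.coe_lt_coe_iff.mp hplt
    refine le_trans (distG_le (isPath_append hP (IsPath.cons he (IsPath.nil v)))) ?_
    rw [pweight_append, pweight_single]
    exact EReal.coe_le_coe_iff.mpr (by linarith)

lemma path_to_source_nil {E : Set (V × V)} {s : V} (hs : ∀ u : V, (u, s) ∉ E) :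
    ∀ {a : V} {P : List (V × V)}, IsPath E a s P → P = [] := by
  intro a P hP
  induction hP with
  | nil => rfl
  | @cons a u t P he hP ih =>
      exfalso
      have hP0 : P = [] := ih hs
      subst hP0
      cases hP
      exact hs a he

lemma last_decomp {E : Set (V × V)} {s v : V} {P : List (V × V)}
    (hP : IsPath E s v P) (hne : P ≠ []) :
    ∃ Q u, P = Q ++ [(u, v)] ∧ IsPath E s u Q ∧ (u, v) ∈ E := by
  induction hP with
  | nil => exact absurd rfl hne
  | @cons a u t P he hP ih =>
      by_cases hP0 : P = []
      · subst hP0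
        cases hP
        exact ⟨[], a, rfl, IsPath.nil a, he⟩
      · obtain ⟨Q, x, rfl, hQ, hx⟩ := ih hP0
        exact ⟨(a, u) :: Q, x, rfl, IsPath.cons he hQ, hx⟩

end Aux
section Step

variable {V : Type*}

lemma claimA {E : Set (V × V)} {w : V × V → ℝ} {s : V} {X : Set V}
    {E' : Set (V × V)} {w' : V × V → ℝ}
    (hc : IsContraction E w s X E' w') (hsX : s ∉ X) :
    ∀ (n : ℕ) (P : List (V × V)) (v : V), P.length ≤ n → IsPath E s v P → v ∉ X →
      ∃ P', IsPath E' s v P' ∧ pweight w' P' ≤ pweight w P := by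
  intro n
  induction n with
  | zero =>
      intro P v hlen hP hv
      have hP0 : P = [] := List.length_eq_zero_iff.mp (Nat.le_zero.mp hlen)
      subst hP0
      cases hP
      exact ⟨[], IsPath.nil s, le_rfl⟩
  | succ n ih =>
      intro P v hlen hP hv
      by_cases hP0 : P = []
      · subst hP0
        cases hP
        exact ⟨[], IsPath.nil s, le_rfl⟩
      · obtain ⟨Q, u, rfl, hQ, hu⟩ := last_decomp hP hP0
        have hQlen : Q.length ≤ n := by
          have := hlen
          simp only [List.length_append, List.length_cons, List.length_nil] at this
          omega
        by_cases hux : u ∈ X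
        · -- last edge leaves the contracted set
          have hsv : (s, v) ∈ E' := (hc.1 s v).mpr ⟨hsX, hv, Or.inr ⟨rfl, u, hux, hu⟩⟩
          refine ⟨[(s, v)], IsPath.cons hsv (IsPath.nil v), ?_⟩
          have hkey : (w' (s, v) : EReal) ≤ (pweight w (Q ++ [(u, v)]) : EReal) := by
            rw [hc.2.2 v hsv]
            refine le_trans (sInf_le (Or.inr ⟨u, hux, hu, rfl⟩)) ?_
            have h3 : distG E w s u ≤ (pweight w Q : EReal) := distG_le hQ
            calc distG E w s u + (w (u, v) : EReal)
                ≤ (pweight w Q : EReal) + (w (u, v) : EReal) := add_le_add h3 le_rfl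
              _ = (pweight w (Q ++ [(u, v)]) : EReal) := by
                  rw [pweight_append, pweight_single, EReal.coe_add]
          rw [pweight_single]
          exact EReal.coe_le_coe_iff.mp hkey
        · obtain ⟨P', hP', hle⟩ := ih Q u hQlen hQ hux
          have huv' : (u, v) ∈ E' := (hc.1 u v).mpr ⟨hux, hv, Or.inl hu⟩
          refine ⟨P' ++ [(u, v)], isPath_append hP' (IsPath.cons huv' (IsPath.nil v)), ?_⟩
          have hwle : w' (u, v) ≤ w (u, v) := by
            by_cases hus : u = s
            · subst hus
              have hkey : (w' (u, v) : EReal) ≤ (w (u, v) : EReal) := by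
                rw [hc.2.2 v huv']
                exact sInf_le (Or.inl ⟨hu, rfl⟩)
              exact EReal.coe_le_coe_iff.mp hkey
            · rw [hc.2.1 u v huv' hus]
          rw [pweight_append, pweight_append, pweight_single, pweight_single]
          exact add_le_add hle hwle

lemma claimB {E : Set (V × V)} {w : V × V → ℝ} {s : V} {X : Set V}
    {E' : Set (V × V)} {w' : V × V → ℝ}
    (hc : IsContraction E w s X E' w') (hw : ∀ e ∈ E, 0 ≤ w e)
    (hs' : ∀ u : V, (u, s) ∉ E') :
    ∀ (n : ℕ) (P' : List (V × V)) (v : V), P'.length ≤ n → IsPath E' s v P' →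
      distG E w s v ≤ (pweight w' P' : EReal) := by
  intro n
  induction n with
  | zero =>
      intro P' v hlen hP'
      have hP0 : P' = [] := List.length_eq_zero_iff.mp (Nat.le_zero.mp hlen)
      subst hP0
      cases hP'
      rw [pweight_nil]
      simpa [pweight_nil] using distG_le (IsPath.nil s) (w := w) (E := E)
  | succ n ih =>
      intro P' v hlen hP'
      by_cases hP0 : P' = []
      · subst hP0
        cases hP'
        rw [pweight_nil]
        simpa [pweight_nil] using distG_le (IsPath.nil s) (w := w) (E := E)
      · obtain ⟨Q', u, rfl, hQ', hu⟩ := last_decomp hP' hP0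
        have hQlen : Q'.length ≤ n := by
          simp only [List.length_append, List.length_cons, List.length_nil] at hlen
          omega
        by_cases hus : u = s
        · subst hus
          have hQ0 : Q' = [] := path_to_source_nil hs' hQ'
          subst hQ0
          simp only [List.nil_append, pweight_single]
          rw [hc.2.2 v hu]
          refine le_sInf ?_
          rintro r (⟨hsvE, rfl⟩ | ⟨x, hx, hxv, rfl⟩)
          · have := distG_le (IsPath.cons hsvE (IsPath.nil v)) (w := w)
            rwa [pweight_single] at this
          · exact distG_triangle hw hxv
        · have huE : (u, v) ∈ E := by
            rcases ((hc.1 u v).mp hu).2.2 with h | h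
            · exact h
            · exact absurd h.1 hus
          have hwuv : w' (u, v) = w (u, v) := hc.2.1 u v hu hus
          have h1 : distG E w s v ≤ distG E w s u + (w (u, v) : EReal) := distG_triangle hw huE
          have h2 : distG E w s u ≤ (pweight w' Q' : EReal) := ih Q' u hQlen hQ'
          calc distG E w s v ≤ distG E w s u + (w (u, v) : EReal) := h1
            _ ≤ (pweight w' Q' : EReal) + (w (u, v) : EReal) := add_le_add h2 le_rfl
            _ = (pweight w' (Q' ++ [(u, v)]) : EReal) := by
                rw [pweight_append, pweight_single, EReal.coe_add, hwuv]

lemma step_lemma {E : Set (V × V)} {w : V × V → ℝ} {s : V} {X : Set V}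
    {E' : Set (V × V)} {w' : V × V → ℝ}
    (hc : IsContraction E w s X E' w') (hw : ∀ e ∈ E, 0 ≤ w e)
    (hs : ∀ u : V, (u, s) ∉ E) (hsX : s ∉ X) :
    (∀ u : V, (u, s) ∉ E') ∧ (∀ e ∈ E', 0 ≤ w' e) ∧
    (∀ v : V, v ∉ X → distG E' w' s v = distG E w s v) := by
  have hs' : ∀ u : V, (u, s) ∉ E' := by
    intro u h
    rcases ((hc.1 u s).mp h).2.2 with h' | ⟨_, x, _, hxs⟩
    · exact hs u h'
    · exact hs x hxs
  refine ⟨hs', ?_, ?_⟩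
  · rintro ⟨u, v⟩ he
    by_cases hus : u = s
    · subst hus
      have hkey : (0 : EReal) ≤ (w' (u, v) : EReal) := by
        rw [hc.2.2 v he]
        refine le_sInf ?_
        rintro r (⟨hsvE, rfl⟩ | ⟨x, hx, hxv, rfl⟩)
        · exact EReal.coe_nonneg.mpr (hw _ hsvE)
        · exact add_nonneg (distG_nonneg hw u x) (EReal.coe_nonneg.mpr (hw _ hxv))
      exact EReal.coe_nonneg.mp hkey
    · rw [hc.2.1 u v he hus]
      rcases ((hc.1 u v).mp he).2.2 with h' | h'
      · exact hw _ h'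
      · exact absurd h'.1 hus
  · intro v hv
    refine le_antisymm ?_ ?_
    · refine le_sInf ?_
      rintro r ⟨P, hP, rfl⟩
      obtain ⟨P', hP', hle⟩ := claimA hc hsX P.length P v le_rfl hP hv
      exact le_trans (distG_le hP') (EReal.coe_le_coe_iff.mpr hle)
    · refine le_sInf ?_
      rintro r ⟨P', hP', rfl⟩
      exact claimB hc hw hs' P'.length P' v le_rfl hP'

end Step

/-- Iterative discover-and-contract scheme: starting from `G₁ = G` and, as long as the
current graph has a vertex other than `s`, obtaining `G_{i+1}` from `G_i` by contracting
`Near_t(s)` (computed in `G_i`) into `s`, every vertex `v` of `G_i` satisfies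
`dist_{G_i}(s, v) = dist_G(s, v)`; in particular the scheme records the correct
distance from `s` to every vertex of `G`. -/
theorem stmt18 {V : Type*} [Fintype V]
    (E₀ : Set (V × V)) (w₀ : V × V → ℝ)
    (hw : ∀ e ∈ E₀, 0 ≤ w₀ e)
    (hA1 : Assumption1 E₀ w₀) (hA2 : Assumption2 E₀ w₀)
    (s : V) (hs : ∀ u : V, (u, s) ∉ E₀)
    (t : ℕ) (ht : 0 < t)
    (Es : ℕ → Set (V × V)) (ws : ℕ → V × V → ℝ) (Vs : ℕ → Set V) (Ns : ℕ → Finset V)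
    (h0E : Es 0 = E₀) (h0w : ws 0 = w₀) (h0V : Vs 0 = Set.univ)
    (hstep : ∀ i : ℕ, Vs i ≠ {s} →
      IsNearSet (Es i) (ws i) s t (Ns i) ∧
      IsContraction (Es i) (ws i) s (↑(Ns i) : Set V) (Es (i + 1)) (ws (i + 1)) ∧
      Vs (i + 1) = Vs i \ (↑(Ns i) : Set V)) :
    ∀ i : ℕ, (∀ j < i, Vs j ≠ {s}) →
      ∀ v ∈ Vs i, distG (Es i) (ws i) s v = distG E₀ w₀ s v := by
  have key : ∀ i : ℕ, (∀ j < i, Vs j ≠ {s}) →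
      (∀ u : V, (u, s) ∉ Es i) ∧ (∀ e ∈ Es i, 0 ≤ ws i e) ∧
      (∀ v ∈ Vs i, distG (Es i) (ws i) s v = distG E₀ w₀ s v) := by
    intro i
    induction i with
    | zero =>
        intro _
        rw [h0E, h0w]
        exact ⟨hs, hw, fun v _ => rfl⟩
    | succ i ih =>
        intro hj
        have hji : ∀ j < i, Vs j ≠ {s} := fun j hjlt => hj j (Nat.lt_succ_of_lt hjlt)
        obtain ⟨hs_i, hw_i, hd_i⟩ := ih hji
        have hVi : Vs i ≠ {s} := hj i (Nat.lt_succ_self i)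
        obtain ⟨hnear, hcon, hVeq⟩ := hstep i hVi
        have hsX : s ∉ (↑(Ns i) : Set V) := by simpa using hnear.1
        obtain ⟨hs', hw', hd'⟩ := step_lemma hcon hw_i hs_i hsX
        refine ⟨hs', hw', fun v hv => ?_⟩
        rw [hVeq] at hv
        rw [hd' v hv.2, hd_i v hv.1]
  intro i hji v hv
  exact (key i hji).2.2 v hv
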